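/- arXiv:1005.1793 — 3 statements merged into one kernel-verified Lean document; each statement's English description precedes it below -/
import Mathlib

section
/- Let y : [0,T] → [0,∞) be a continuous nonincreasing function and let A : [0,T] → [0,∞) be a continuous nondecreasing function with A(0) = 0 and A(T) ≤ a for some a > 0. If y(t) ≤ ∫_{(t,T]} y(s) dA(s) for every t ∈ [0,T] (Lebesgue–Stieltjes integral), then y ≡ 0 on [0,T]. -/
open Set MeasureTheory

/-- Backward generalized Gronwall lemma: if `y ≥ 0` is continuous nonincreasing on
`[0,T]`, `A` is a continuous nondecreasing (Stieltjes) function with `A 0 = 0` and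
`A T ≤ a`, and `y t ≤ ∫_{(t,T]} y dA` for all `t ∈ [0,T]`, then `y ≡ 0` on `[0,T]`. -/
theorem stmt_11 (T a : ℝ) (hT : 0 < T) (ha : 0 < a)
    (y : ℝ → ℝ) (hy : ContinuousOn y (Icc 0 T)) (hyanti : AntitoneOn y (Icc 0 T))
    (hy0 : ∀ t ∈ Icc 0 T, 0 ≤ y t)
    (A : StieltjesFunction ℝ) (hA : Continuous A) (hA0 : A 0 = 0)
    (hA0' : ∀ t ∈ Icc 0 T, 0 ≤ A t) (hAa : A T ≤ a)
    (hineq : ∀ t ∈ Icc 0 T, y t ≤ ∫ s in Ioc t T, y s ∂A.measure) :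
    ∀ t ∈ Icc 0 T, y t = 0 := by
  set μ := A.measure with hμ
  -- y is integrable on any Ioc inside [0,T]
  have hint : ∀ u v : ℝ, u ∈ Icc 0 T → v ∈ Icc 0 T →
      IntegrableOn y (Ioc u v) μ := by
    intro u v hu hv
    have h1 : IntegrableOn y (Icc 0 T) μ :=
      hy.integrableOn_compact isCompact_Icc
    exact h1.mono_set (fun x hx => ⟨le_trans hu.1 (le_of_lt hx.1), le_trans hx.2 hv.2⟩)
  -- the zero set
  set Z := Icc 0 T ∩ y ⁻¹' {0} with hZ
  have hTZ : T ∈ Z := by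
    have h := hineq T ⟨le_of_lt hT, le_refl T⟩
    simp only [Ioc_self, Measure.restrict_empty, integral_zero_measure] at h
    exact ⟨⟨le_of_lt hT, le_refl T⟩, le_antisymm h (hy0 T ⟨le_of_lt hT, le_refl T⟩)⟩
  have hZclosed : IsClosed Z := by
    exact hy.preimage_isClosed_of_isClosed isClosed_Icc isClosed_singleton
  have hZbdd : BddBelow Z := ⟨0, fun x hx => hx.1.1⟩
  set s := sInf Z with hs
  have hsZ : s ∈ Z := hZclosed.csInf_mem ⟨T, hTZ⟩ hZbdd
  have hsmem : s ∈ Icc 0 T := hsZ.1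
  have hys : y s = 0 := hsZ.2
  -- y = 0 on [s, T]
  have hzero : ∀ t ∈ Icc 0 T, s ≤ t → y t = 0 := by
    intro t ht hst
    exact le_antisymm (hys ▸ hyanti hsmem ht hst) (hy0 t ht)
  -- show s = 0
  have hs0 : s = 0 := by
    by_contra h0
    have hspos : 0 < s := lt_of_le_of_ne hsmem.1 (Ne.symm h0)
    -- continuity of A at s
    have hcont : ContinuousAt A s := hA.continuousAt
    rw [Metric.continuousAt_iff] at hcont
    obtain ⟨δ, hδ, hδ'⟩ := hcont (1/2) (by norm_num)
    set t := max 0 (s - δ/2) with ht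
    have hts : t < s := by
      apply max_lt hspos
      linarith
    have htmem : t ∈ Icc 0 T := ⟨le_max_left _ _, le_trans (le_of_lt hts) hsmem.2⟩
    have hAst : A s - A t ≤ 1/2 := by
      have hd : dist t s < δ := by
        rw [Real.dist_eq, abs_of_nonpos (by linarith)]
        have : s - δ/2 ≤ t := le_max_right _ _
        linarith
      have := hδ' hd
      rw [Real.dist_eq] at this
      have := abs_le.mp (le_of_lt this)
      linarith [this.2, abs_nonneg (A t - A s)]
    -- split the integral
    have hsplit : (∫ u in Ioc t T, y u ∂μ)
        = (∫ u in Ioc t s, y u ∂μ) + (∫ u in Ioc s T, y u ∂μ) := by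
      rw [← setIntegral_union]
      · rw [Ioc_union_Ioc_eq_Ioc (le_of_lt hts) hsmem.2]
      · exact Ioc_disjoint_Ioc_of_le le_rfl
      · exact measurableSet_Ioc
      · exact hint t s htmem hsmem
      · exact hint s T hsmem ⟨le_of_lt hT, le_refl T⟩
    have hright : (∫ u in Ioc s T, y u ∂μ) = 0 := by
      apply setIntegral_eq_zero_of_forall_eq_zero
      intro u hu
      exact hzero u ⟨le_trans hsmem.1 (le_of_lt hu.1), hu.2⟩ (le_of_lt hu.1)
    have hleft : (∫ u in Ioc t s, y u ∂μ) ≤ y t * (A s - A t) := by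
      have hmono : ∀ u ∈ Ioc t s, y u ≤ y t := by
        intro u hu
        exact hyanti htmem ⟨le_trans htmem.1 (le_of_lt hu.1), le_trans hu.2 hsmem.2⟩
          (le_of_lt hu.1)
      calc (∫ u in Ioc t s, y u ∂μ) ≤ ∫ _ in Ioc t s, y t ∂μ := by
            apply setIntegral_mono_on (hint t s htmem hsmem)
              (integrableOn_const (by
                rw [hμ, A.measure_Ioc]; exact ENNReal.ofReal_ne_top))
              measurableSet_Ioc hmono
        _ = (μ (Ioc t s)).toReal * y t := by rw [setIntegral_const, smul_eq_mul, measureReal_def]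
        _ = y t * (A s - A t) := by
            rw [hμ, A.measure_Ioc, ENNReal.toReal_ofReal
              (by linarith [A.mono (le_of_lt hts)] : (0:ℝ) ≤ A s - A t)]
            ring
    have hyt0 : 0 ≤ y t := hy0 t htmem
    have : y t ≤ y t * (1/2) := by
      calc y t ≤ ∫ u in Ioc t T, y u ∂μ := hineq t htmem
        _ = (∫ u in Ioc t s, y u ∂μ) := by rw [hsplit, hright, add_zero]
        _ ≤ y t * (A s - A t) := hleft
        _ ≤ y t * (1/2) := mul_le_mul_of_nonneg_left hAst hyt0
    have hyt : y t = 0 := by nlinarith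
    have : s ≤ t := csInf_le hZbdd ⟨htmem, hyt⟩
    linarith
  intro t ht
  exact hzero t ht (hs0 ▸ ht.1)
end

section
/- Let A : [0,T] → [0,∞) be continuous, strictly increasing with A(0) = 0, and define the right inverse τ_t = inf{ s ∈ [0,T] : A(s) ≥ t } ∧ T for t ≥ 0. Then for every bounded measurable y : [0,T] → [0,∞) and every t₀ ∈ [0, A(T)], the change of variables formula ∫_{(τ_{t₀}, T]} y(s) dA(s) = ∫_{t₀}^{A(T)} y(τ_u) du holds. -/
open Set MeasureTheory

/-- Change of variables for the Lebesgue–Stieltjes integral via the generalized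
right inverse `τ t = inf { s ∈ [0,T] : A s ≥ t } ∧ T` of a continuous strictly
increasing function `A` with `A 0 = 0`:
`∫_{(τ t₀, T]} y dA = ∫_{t₀}^{A T} y(τ u) du`. -/
theorem stmt_12 (T : ℝ) (hT : 0 < T) (A : StieltjesFunction ℝ)
    (hA : Continuous A) (hA0 : A 0 = 0) (hAmono : StrictMonoOn A (Icc 0 T))
    (τ : ℝ → ℝ) (hτ : ∀ t, τ t = min (sInf {s ∈ Icc 0 T | t ≤ A s}) T)
    (y : ℝ → ℝ) (hmeas : Measurable y) (hnonneg : ∀ t, 0 ≤ y t)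
    (hbdd : ∃ M : ℝ, ∀ t, y t ≤ M)
    (t₀ : ℝ) (ht₀ : t₀ ∈ Icc 0 (A T)) :
    ∫ s in Ioc (τ t₀) T, y s ∂A.measure = ∫ u in t₀..(A T), y (τ u) := by
  obtain ⟨ht₀0, ht₀T⟩ := ht₀
  have hTmem : T ∈ Icc (0:ℝ) T := ⟨hT.le, le_rfl⟩
  -- key facts about τ on [0, A T]
  have key : ∀ t ∈ Icc 0 (A T), τ t ∈ Icc 0 T ∧ A (τ t) = t := by
    rintro t ⟨ht0, htT⟩
    set S := {s ∈ Icc 0 T | t ≤ A s} with hS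
    have hTS : T ∈ S := ⟨hTmem, htT⟩
    have hne : S.Nonempty := ⟨T, hTS⟩
    have hbb : BddBelow S := ⟨0, fun s hs => hs.1.1⟩
    have hclosed : IsClosed S := by
      have : S = Icc 0 T ∩ A ⁻¹' Ici t := by
        ext s; simp [hS, Set.mem_sep_iff, Set.mem_preimage, Set.mem_Ici]
      rw [this]
      exact isClosed_Icc.inter (isClosed_Ici.preimage hA)
    have hmemS : sInf S ∈ S := hclosed.csInf_mem hne hbb
    have hleT : sInf S ≤ T := csInf_le hbb hTS
    have hge0 : 0 ≤ sInf S := hmemS.1.1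
    have hτt : τ t = sInf S := by rw [hτ]; exact min_eq_left hleT
    have hAeq : A (sInf S) = t := by
      have hsub : Icc (A 0) (A (sInf S)) ⊆ A '' Icc 0 (sInf S) :=
        intermediate_value_Icc hge0 hA.continuousOn
      have htmem : t ∈ Icc (A 0) (A (sInf S)) := ⟨by rw [hA0]; exact ht0, hmemS.2⟩
      obtain ⟨s, hs, hAs⟩ := hsub htmem
      have hsS : s ∈ S := ⟨⟨hs.1, hs.2.trans hleT⟩, hAs.ge⟩
      have hseq : s = sInf S := le_antisymm hs.2 (csInf_le hbb hsS)
      rw [← hseq, hAs]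
    exact ⟨by rw [hτt]; exact ⟨hge0, hleT⟩, by rw [hτt]; exact hAeq⟩
  obtain ⟨hτt₀mem, hAτt₀⟩ := key t₀ ⟨ht₀0, ht₀T⟩
  -- τ is below T
  have hτleT : ∀ t, τ t ≤ T := fun t => by rw [hτ]; exact min_le_right _ _
  -- strictly above τ t₀ on (t₀, A T]
  have hτgt : ∀ u ∈ Ioc t₀ (A T), τ t₀ < τ u := by
    rintro u ⟨hu1, hu2⟩
    obtain ⟨hτumem, hAτu⟩ := key u ⟨ht₀0.trans hu1.le, hu2⟩
    by_contra h
    push_neg at h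
    have : u ≤ t₀ := by
      calc u = A (τ u) := hAτu.symm
        _ ≤ A (τ t₀) := A.mono h
        _ = t₀ := hAτt₀
    exact absurd hu1 (not_lt.2 this)
  -- monotone modification of τ
  set τ' : ℝ → ℝ := fun t => if t ≤ A T then τ t else T with hτ'def
  have hτ'mono : Monotone τ' := by
    intro s t hst
    by_cases hs : s ≤ A T
    · by_cases ht : t ≤ A T
      · simp only [hτ'def, if_pos hs, if_pos ht, hτ]
        have hsub : {x ∈ Icc 0 T | t ≤ A x} ⊆ {x ∈ Icc 0 T | s ≤ A x} :=
          fun x hx => ⟨hx.1, hst.trans hx.2⟩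
        have hne : {x ∈ Icc 0 T | t ≤ A x}.Nonempty := ⟨T, hTmem, ht⟩
        have hbb : BddBelow {x ∈ Icc 0 T | s ≤ A x} := ⟨0, fun x hx => hx.1.1⟩
        exact min_le_min (csInf_le_csInf hbb hne hsub) le_rfl
      · simp only [hτ'def, if_pos hs, if_neg ht]
        exact hτleT s
    · have ht : ¬ t ≤ A T := fun h => hs (hst.trans h)
      simp [hτ'def, if_neg hs, if_neg ht]
  have hτ'meas : Measurable τ' := hτ'mono.measurable
  -- the measure identity
  have hmeq : (volume.restrict (Ioc t₀ (A T))).map τ'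
      = A.measure.restrict (Ioc (τ t₀) T) := by
    refine Measure.ext_of_Ioc' _ _ (fun a b hab => ?_) (fun a b hab => ?_)
    · rw [Measure.map_apply hτ'meas measurableSet_Ioc,
        Measure.restrict_apply (hτ'meas measurableSet_Ioc)]
      exact ((measure_mono inter_subset_right).trans_lt measure_Ioc_lt_top).ne
    · rw [Measure.map_apply hτ'meas measurableSet_Ioc,
        Measure.restrict_apply (hτ'meas measurableSet_Ioc),
        Measure.restrict_apply measurableSet_Ioc]
      set p := min (max a (τ t₀)) T with hp
      set q := min (max b (τ t₀)) T with hq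
      have hτt₀p : τ t₀ ≤ p := le_min (le_max_right _ _) hτt₀mem.2
      have hτt₀q : τ t₀ ≤ q := le_min (le_max_right _ _) hτt₀mem.2
      have hpmem : p ∈ Icc (0:ℝ) T := ⟨hτt₀mem.1.trans hτt₀p, min_le_right _ _⟩
      have hqmem : q ∈ Icc (0:ℝ) T := ⟨hτt₀mem.1.trans hτt₀q, min_le_right _ _⟩
      have hset : τ' ⁻¹' Ioc a b ∩ Ioc t₀ (A T) = Ioc (A p) (A q) := by
        ext u
        simp only [Set.mem_inter_iff, Set.mem_preimage, Set.mem_Ioc]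
        constructor
        · rintro ⟨⟨hau, hub⟩, hut₀, huAT⟩
          have hτ'u : τ' u = τ u := if_pos huAT
          rw [hτ'u] at hau hub
          obtain ⟨hτumem, hAτu⟩ := key u ⟨ht₀0.trans hut₀.le, huAT⟩
          have hτt₀u : τ t₀ < τ u := hτgt u ⟨hut₀, huAT⟩
          constructor
          · have hptu : p < τ u :=
              (min_le_left _ _).trans_lt (max_lt hau hτt₀u)
            calc A p < A (τ u) := hAmono hpmem hτumem hptu
              _ = u := hAτu
          · have htuq : τ u ≤ q :=
              le_min (hub.trans (le_max_left _ _)) (hτleT u)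
            calc u = A (τ u) := hAτu.symm
              _ ≤ A q := A.mono htuq
        · rintro ⟨hApu, huAq⟩
          have hut₀ : t₀ < u := by
            calc t₀ = A (τ t₀) := hAτt₀.symm
              _ ≤ A p := A.mono hτt₀p
              _ < u := hApu
          have huAT : u ≤ A T := huAq.trans (A.mono hqmem.2)
          have hτ'u : τ' u = τ u := if_pos huAT
          obtain ⟨hτumem, hAτu⟩ := key u ⟨ht₀0.trans hut₀.le, huAT⟩
          have hτt₀u : τ t₀ < τ u := hτgt u ⟨hut₀, huAT⟩
          have hptu : p < τ u := by
            by_contra h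
            push_neg at h
            exact absurd hApu (not_lt.2 (hAτu ▸ A.mono h))
          have htuq : τ u ≤ q := by
            by_contra h
            push_neg at h
            exact absurd huAq (not_le.2 (hAτu ▸ hAmono hqmem hτumem h))
          refine ⟨⟨?_, ?_⟩, hut₀, huAT⟩
          · rw [hτ'u]
            have hmaxT : max a (τ t₀) ≤ T := by
              by_contra h
              push_neg at h
              rw [hp, min_eq_right h.le] at hptu
              exact absurd (hτleT u) (not_le.2 hptu)
            calc a ≤ max a (τ t₀) := le_max_left _ _
              _ = p := (min_eq_left hmaxT).symm
              _ < τ u := hptu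
          · rw [hτ'u]
            have hτt₀b : τ t₀ ≤ b := by
              by_contra h
              push_neg at h
              rw [hq, max_eq_right h.le, min_eq_left hτt₀mem.2] at htuq
              exact absurd hτt₀u (not_lt.2 htuq)
            calc τ u ≤ q := htuq
              _ ≤ max b (τ t₀) := min_le_left _ _
              _ = b := max_eq_left hτt₀b
      rw [hset, Set.Ioc_inter_Ioc, Real.volume_Ioc, A.measure_Ioc]
      -- compare the two expressions
      rcases le_or_gt (max a (τ t₀)) T with hmT | hmT
      · have hp' : p = max a (τ t₀) := min_eq_left hmT
        rcases le_or_gt (τ t₀) b with hτb | hτb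
        · have hq' : q = min b T := by rw [hq, max_eq_left hτb]
          rw [hp', hq']
        · have hq' : q = τ t₀ := by
            rw [hq, max_eq_right hτb.le, min_eq_left hτt₀mem.2]
          rw [ENNReal.ofReal_of_nonpos, ENNReal.ofReal_of_nonpos]
          · exact sub_nonpos.2 (A.mono (((min_le_left b T).trans hτb.le).trans
              (le_max_right a (τ t₀))))
          · rw [hq']
            exact sub_nonpos.2 (A.mono hτt₀p)
      · have hp' : p = T := min_eq_right hmT.le
        rw [ENNReal.ofReal_of_nonpos, ENNReal.ofReal_of_nonpos]
        · exact sub_nonpos.2 (A.mono ((min_le_right b T).trans hmT.le))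
        · rw [hp']
          exact sub_nonpos.2 (A.mono hqmem.2)
  -- transport the integral
  calc ∫ s in Ioc (τ t₀) T, y s ∂A.measure
      = ∫ s, y s ∂((volume.restrict (Ioc t₀ (A T))).map τ') := by rw [hmeq]
    _ = ∫ u in Ioc t₀ (A T), y (τ' u) :=
        integral_map hτ'meas.aemeasurable hmeas.aestronglyMeasurable
    _ = ∫ u in Ioc t₀ (A T), y (τ u) := by
        refine setIntegral_congr_fun measurableSet_Ioc (fun u hu => ?_)
        simp only [hτ'def, if_pos hu.2]
    _ = ∫ u in t₀..(A T), y (τ u) := (intervalIntegral.integral_of_le ht₀T).symm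
end

section
/- Let T > 0, let y, s : [0,T] → ℝ be continuous functions with y ≥ s pointwise, let K_n, K : [0,T] → [0,∞) be continuous nondecreasing functions with K_n(0)=K(0)=0, and suppose y_n : [0,T] → ℝ are continuous with y_n → y uniformly on [0,T] and K_n → K uniformly on [0,T]. Then ∫_{(0,T]} 1_{{y(t) > s(t)}} (y_n(t) − s(t)) dK_n(t) → ∫_{(0,T]} 1_{{y(t) > s(t)}} (y(t) − s(t)) dK(t). -/
open Set MeasureTheory Filter

private lemma single_interval (K : StieltjesFunction ℝ) {g : ℝ → ℝ} {a b : ℝ} (hab : a ≤ b)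
    (hint : IntegrableOn g (Ioc a b) K.measure) {ε : ℝ}
    (h : ∀ x ∈ Ioc a b, |g x - g b| ≤ ε) :
    |(∫ x in Ioc a b, g x ∂K.measure) - g b * (K b - K a)| ≤ ε * (K b - K a) := by
  have hKab : (0:ℝ) ≤ K b - K a := sub_nonneg.2 (K.mono hab)
  have hm : K.measure (Ioc a b) = ENNReal.ofReal (K b - K a) := K.measure_Ioc a b
  have hfin : K.measure (Ioc a b) < ⊤ := by rw [hm]; exact ENNReal.ofReal_lt_top
  have htr : (K.measure (Ioc a b)).toReal = K b - K a := by
    rw [hm, ENNReal.toReal_ofReal hKab]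
  have hconst : IntegrableOn (fun _ : ℝ => g b) (Ioc a b) K.measure :=
    integrableOn_const hfin.ne
  have hsub : (∫ x in Ioc a b, g x ∂K.measure) - g b * (K b - K a)
      = ∫ x in Ioc a b, (g x - g b) ∂K.measure := by
    rw [integral_sub hint hconst, setIntegral_const, measureReal_def, htr, smul_eq_mul, mul_comm]
  rw [hsub, ← Real.norm_eq_abs]
  calc ‖∫ x in Ioc a b, (g x - g b) ∂K.measure‖
      ≤ ε * (K.measure (Ioc a b)).toReal := by
        refine norm_setIntegral_le_of_norm_le_const hfin (fun x hx => ?_)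
        · rw [Real.norm_eq_abs]; exact h x hx
    _ = ε * (K b - K a) := by rw [htr]

private lemma sum_interval (K : StieltjesFunction ℝ) {g : ℝ → ℝ} (hg : Continuous g)
    {ε : ℝ} (t : ℕ → ℝ) (hmono : Monotone t) :
    ∀ m : ℕ, (∀ i < m, ∀ x ∈ Ioc (t i) (t (i+1)), |g x - g (t (i+1))| ≤ ε) →
    |(∫ x in Ioc (t 0) (t m), g x ∂K.measure) -
        ∑ i ∈ Finset.range m, g (t (i+1)) * (K (t (i+1)) - K (t i))|
      ≤ ε * (K (t m) - K (t 0)) := by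
  intro m
  induction m with
  | zero => intro _; simp
  | succ m IH =>
    intro h
    have hIH := IH (fun i hi x hx => h i (Nat.lt_succ_of_lt hi) x hx)
    have hab : t 0 ≤ t m := hmono (Nat.zero_le m)
    have hbc : t m ≤ t (m+1) := hmono (Nat.le_succ m)
    have hint1 : IntegrableOn g (Ioc (t 0) (t m)) K.measure := hg.integrableOn_Ioc
    have hint2 : IntegrableOn g (Ioc (t m) (t (m+1))) K.measure := hg.integrableOn_Ioc
    have hsplit : (∫ x in Ioc (t 0) (t (m+1)), g x ∂K.measure)
        = (∫ x in Ioc (t 0) (t m), g x ∂K.measure)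
          + ∫ x in Ioc (t m) (t (m+1)), g x ∂K.measure := by
      rw [← Ioc_union_Ioc_eq_Ioc hab hbc,
        setIntegral_union (Ioc_disjoint_Ioc_of_le le_rfl) measurableSet_Ioc hint1 hint2]
    have hone := single_interval K hbc hint2 (h m (Nat.lt_succ_self m))
    rw [hsplit, Finset.sum_range_succ]
    have heq2 : (∫ x in Ioc (t 0) (t m), g x ∂K.measure)
          + (∫ x in Ioc (t m) (t (m+1)), g x ∂K.measure)
          - ((∑ i ∈ Finset.range m, g (t (i+1)) * (K (t (i+1)) - K (t i)))
            + g (t (m+1)) * (K (t (m+1)) - K (t m)))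
        = ((∫ x in Ioc (t 0) (t m), g x ∂K.measure)
            - ∑ i ∈ Finset.range m, g (t (i+1)) * (K (t (i+1)) - K (t i)))
          + ((∫ x in Ioc (t m) (t (m+1)), g x ∂K.measure)
            - g (t (m+1)) * (K (t (m+1)) - K (t m))) := by ring
    rw [heq2]
    refine le_trans (abs_add_le _ _) ?_
    refine le_trans (add_le_add hIH hone) (le_of_eq (by ring))

/-- Convergence of Stieltjes integrals: if `y_n → y` uniformly on `[0,T]`,
`K_n → K` uniformly on `[0,T]` (continuous nondecreasing, vanishing at `0`), and
`y ≥ s` on `[0,T]`, then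
`∫_{(0,T]} 1_{{y>s}} (y_n − s) dK_n → ∫_{(0,T]} 1_{{y>s}} (y − s) dK`. -/
theorem stmt_18 (T : ℝ) (hT : 0 < T)
    (y s : ℝ → ℝ) (hy : Continuous y) (hs : Continuous s)
    (hys : ∀ t ∈ Icc 0 T, s t ≤ y t)
    (Kn : ℕ → StieltjesFunction ℝ) (K : StieltjesFunction ℝ)
    (hKnc : ∀ n, Continuous (Kn n)) (hKc : Continuous K)
    (hKn0 : ∀ n, Kn n 0 = 0) (hK0 : K 0 = 0)
    (yn : ℕ → ℝ → ℝ) (hync : ∀ n, Continuous (yn n))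
    (hyn : TendstoUniformlyOn (fun n t => yn n t) y atTop (Icc 0 T))
    (hKn : TendstoUniformlyOn (fun n t => Kn n t) K atTop (Icc 0 T)) :
    Tendsto (fun n =>
        ∫ t in Ioc 0 T, indicator {t | s t < y t} (fun t => yn n t - s t) t
          ∂(Kn n).measure)
      atTop
      (nhds (∫ t in Ioc 0 T, indicator {t | s t < y t} (fun t => y t - s t) t
          ∂K.measure)) := by
  have hAopen : IsOpen {t | s t < y t} := isOpen_lt hs hy
  have hAm : MeasurableSet {t | s t < y t} := hAopen.measurableSet
  set g : ℝ → ℝ := fun t => max (y t - s t) 0 with hgdef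
  have hgc : Continuous g := (hy.sub hs).max continuous_const
  have hgeq : ∀ x ∈ Icc 0 T, indicator {t | s t < y t} (fun t => y t - s t) x = g x := by
    intro x hx
    by_cases hxA : x ∈ {t | s t < y t}
    · rw [indicator_of_mem hxA]
      exact (max_eq_left (sub_nonneg.2 (le_of_lt hxA))).symm
    · rw [indicator_of_notMem hxA]
      have h2 : ¬ s x < y x := hxA
      have h1 : y x - s x = 0 := by
        have := hys x hx; have := not_lt.mp h2; linarith
      simp [hgdef, h1]
  have hL : (∫ x in Ioc 0 T, indicator {t | s t < y t} (fun t => y t - s t) x ∂K.measure)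
      = ∫ x in Ioc 0 T, g x ∂K.measure := by
    refine setIntegral_congr_fun measurableSet_Ioc (fun x hx => ?_)
    exact hgeq x (Ioc_subset_Icc_self hx)
  rw [hL, Metric.tendsto_atTop]
  intro ε hε
  have hTicc : T ∈ Icc (0:ℝ) T := ⟨hT.le, le_refl T⟩
  have h0icc : (0:ℝ) ∈ Icc (0:ℝ) T := ⟨le_refl 0, hT.le⟩
  have hKT : 0 ≤ K T := by rw [← hK0]; exact K.mono hT.le
  set C : ℝ := K T + 1 with hC
  have hCpos : 0 < C := by positivity
  set ε₁ : ℝ := ε / (4 * C) with hε₁def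
  have hε₁ : 0 < ε₁ := by positivity
  -- uniform continuity of g on [0, T]
  obtain ⟨δ, hδ, hmod⟩ := Metric.uniformContinuousOn_iff.mp
    ((isCompact_Icc : IsCompact (Icc (0:ℝ) T)).uniformContinuousOn_of_continuous hgc.continuousOn) ε₁ hε₁
  -- choose the mesh
  obtain ⟨m, hm⟩ := exists_nat_gt (T / δ)
  have hmpos : 0 < (m:ℝ) := lt_trans (div_pos hT hδ) hm
  have hTm : T / m < δ := by
    have h' : T < (m:ℝ) * δ := by
      calc T = (T / δ) * δ := by field_simp
        _ < (m:ℝ) * δ := mul_lt_mul_of_pos_right hm hδ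
    rw [div_lt_iff₀ hmpos]
    linarith
  have hTmpos : 0 < T / m := div_pos hT hmpos
  set t : ℕ → ℝ := fun i => (i : ℝ) * (T / m) with htdef
  have hmono : Monotone t := fun i j hij =>
    mul_le_mul_of_nonneg_right (Nat.cast_le.2 hij) hTmpos.le
  have ht0 : t 0 = 0 := by simp [htdef]
  have htm : t m = T := by
    simp only [htdef]
    field_simp
  have htmem : ∀ i ≤ m, t i ∈ Icc 0 T := by
    intro i hi
    constructor
    · rw [← ht0]; exact hmono (Nat.zero_le i)
    · rw [← htm]; exact hmono hi
  have hstep : t 1 - t 0 = T / m := by simp [htdef]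
  have hmod' : ∀ i < m, ∀ x ∈ Ioc (t i) (t (i+1)), |g x - g (t (i+1))| ≤ ε₁ := by
    intro i hi x hx
    have hi1 : i + 1 ≤ m := hi
    have hti : t i ∈ Icc 0 T := htmem i (le_of_lt hi)
    have hti1 : t (i+1) ∈ Icc 0 T := htmem (i+1) hi1
    have hxmem : x ∈ Icc 0 T :=
      ⟨le_trans hti.1 (le_of_lt hx.1), le_trans hx.2 hti1.2⟩
    have hdiff : t (i+1) - t i = T / m := by
      simp only [htdef]; push_cast; ring
    have hdist : dist x (t (i+1)) < δ := by
      rw [Real.dist_eq, abs_of_nonpos (by linarith [hx.2])]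
      have : -(x - t (i+1)) = t (i+1) - x := by ring
      rw [this]
      calc t (i+1) - x ≤ t (i+1) - t i := by linarith [hx.1]
        _ = T / m := hdiff
        _ < δ := hTm
    have := hmod x hxmem (t (i+1)) hti1 hdist
    rw [Real.dist_eq] at this
    exact this.le
  -- the key step-function estimate, for any Stieltjes function
  have key : ∀ K' : StieltjesFunction ℝ,
      |(∫ x in Ioc 0 T, g x ∂K'.measure) -
          ∑ i ∈ Finset.range m, g (t (i+1)) * (K' (t (i+1)) - K' (t i))|
        ≤ ε₁ * (K' T - K' 0) := by
    intro K'
    have := sum_interval K' hgc t hmono m hmod'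
    rwa [ht0, htm] at this
  -- pointwise convergence of Kn
  have hptw : ∀ x ∈ Icc (0:ℝ) T, Tendsto (fun n => Kn n x) atTop (nhds (K x)) :=
    fun x hx => hKn.tendsto_at hx
  -- convergence of partial sums
  have hS : Tendsto
      (fun n => ∑ i ∈ Finset.range m, g (t (i+1)) * (Kn n (t (i+1)) - Kn n (t i)))
      atTop
      (nhds (∑ i ∈ Finset.range m, g (t (i+1)) * (K (t (i+1)) - K (t i)))) := by
    refine tendsto_finset_sum _ fun i hi => ?_
    have hi' : i < m := Finset.mem_range.mp hi
    exact ((hptw (t (i+1)) (htmem (i+1) hi')).sub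
      (hptw (t i) (htmem i hi'.le))).const_mul _
  have E1 := Metric.tendstoUniformlyOn_iff.mp hyn ε₁ hε₁
  have E2 := (Metric.tendsto_nhds.mp (hptw T hTicc)) 1 one_pos
  have E3 := (Metric.tendsto_nhds.mp hS) (ε / 4) (by positivity)
  obtain ⟨N, hN⟩ := eventually_atTop.mp ((E1.and E2).and E3)
  refine ⟨N, fun n hn => ?_⟩
  obtain ⟨⟨h1, h2⟩, h3⟩ := hN n hn
  -- notation
  set μn := (Kn n).measure with hμn
  have hmassn : (0:ℝ) ≤ Kn n T - Kn n 0 := sub_nonneg.2 ((Kn n).mono hT.le)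
  have hmassC : Kn n T - Kn n 0 ≤ C := by
    rw [Real.dist_eq] at h2
    have := abs_lt.mp h2
    rw [hKn0 n, hC]
    linarith [this.1, this.2]
  have hmassK : K T - K 0 ≤ C := by rw [hK0, hC]; linarith
  have hmassK0 : (0:ℝ) ≤ K T - K 0 := sub_nonneg.2 (K.mono hT.le)
  have hfinn : μn (Ioc 0 T) < ⊤ := by
    rw [hμn, (Kn n).measure_Ioc]; exact ENNReal.ofReal_lt_top
  have htrn : (μn (Ioc 0 T)).toReal = Kn n T - Kn n 0 := by
    rw [hμn, (Kn n).measure_Ioc, ENNReal.toReal_ofReal hmassn]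
  -- integrability
  have hgint : IntegrableOn g (Ioc 0 T) μn := hgc.integrableOn_Ioc
  have hbd : ∀ x ∈ Ioc (0:ℝ) T,
      ‖indicator {t | s t < y t} (fun t => yn n t - s t) x - g x‖ ≤ ε₁ := by
    intro x hx
    have hxI : x ∈ Icc (0:ℝ) T := Ioc_subset_Icc_self hx
    rw [← hgeq x hxI, Real.norm_eq_abs]
    by_cases hxA : x ∈ {t | s t < y t}
    · rw [indicator_of_mem hxA, indicator_of_mem hxA]
      have := h1 x hxI
      rw [dist_comm, Real.dist_eq] at this
      have heq : yn n x - s x - (y x - s x) = yn n x - y x := by ring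
      rw [heq]
      exact this.le
    · rw [indicator_of_notMem hxA, indicator_of_notMem hxA]
      simpa using hε₁.le
  have hdiffmble : AEStronglyMeasurable
      (fun x => indicator {t | s t < y t} (fun t => yn n t - s t) x - g x) μn :=
    ((((hync n).sub hs).stronglyMeasurable.indicator hAm).sub
      hgc.stronglyMeasurable).aestronglyMeasurable
  have hdiffint : IntegrableOn
      (fun x => indicator {t | s t < y t} (fun t => yn n t - s t) x - g x)
      (Ioc 0 T) μn := by
    refine Measure.integrableOn_of_bounded (M := ε₁) hfinn.ne hdiffmble ?_
    rw [ae_restrict_iff' measurableSet_Ioc]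
    exact Eventually.of_forall hbd
  have hfnint : IntegrableOn
      (fun x => indicator {t | s t < y t} (fun t => yn n t - s t) x) (Ioc 0 T) μn := by
    have h := hdiffint.add hgint
    have heq : ((fun x => indicator {t | s t < y t} (fun t => yn n t - s t) x - g x) + g)
        = fun x => indicator {t | s t < y t} (fun t => yn n t - s t) x := by
      funext x; simp
    exact heq ▸ h
  -- T1
  have hT1 : |(∫ x in Ioc 0 T, indicator {t | s t < y t} (fun t => yn n t - s t) x ∂μn)
      - ∫ x in Ioc 0 T, g x ∂μn| ≤ ε₁ * C := by
    have heq : (∫ x in Ioc 0 T, indicator {t | s t < y t} (fun t => yn n t - s t) x ∂μn)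
        - ∫ x in Ioc 0 T, g x ∂μn
        = ∫ x in Ioc 0 T,
            (indicator {t | s t < y t} (fun t => yn n t - s t) x - g x) ∂μn :=
      (integral_sub hfnint hgint).symm
    rw [heq, ← Real.norm_eq_abs]
    calc ‖_‖ ≤ ε₁ * (μn (Ioc 0 T)).toReal :=
          norm_setIntegral_le_of_norm_le_const hfinn hbd
      _ = ε₁ * (Kn n T - Kn n 0) := by rw [htrn]
      _ ≤ ε₁ * C := mul_le_mul_of_nonneg_left hmassC hε₁.le
  -- T2
  have hT2 : |(∫ x in Ioc 0 T, g x ∂μn)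
      - ∑ i ∈ Finset.range m, g (t (i+1)) * (Kn n (t (i+1)) - Kn n (t i))| ≤ ε₁ * C :=
    le_trans (key (Kn n)) (mul_le_mul_of_nonneg_left hmassC hε₁.le)
  -- T4
  have hT4 : |(∫ x in Ioc 0 T, g x ∂K.measure)
      - ∑ i ∈ Finset.range m, g (t (i+1)) * (K (t (i+1)) - K (t i))| ≤ ε₁ * C :=
    le_trans (key K) (mul_le_mul_of_nonneg_left hmassK hε₁.le)
  -- T3
  rw [Real.dist_eq] at h3
  -- combine
  have hε₁C : ε₁ * C = ε / 4 := by
    rw [hε₁def]; field_simp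
  rw [Real.dist_eq]
  have habs4 : ∀ a b c d e : ℝ, |a - e| ≤ |a - b| + |b - c| + |c - d| + |d - e| := by
    intro a b c d e
    calc |a - e| = |(a - b) + (b - c) + (c - d) + (d - e)| := by ring_nf
      _ ≤ |(a - b) + (b - c) + (c - d)| + |d - e| := abs_add_le _ _
      _ ≤ |(a - b) + (b - c)| + |c - d| + |d - e| := by
          gcongr; exact abs_add_le _ _
      _ ≤ |a - b| + |b - c| + |c - d| + |d - e| := by
          gcongr; exact abs_add_le _ _
  calc |(∫ x in Ioc 0 T, indicator {t | s t < y t} (fun t => yn n t - s t) x ∂μn)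
        - ∫ x in Ioc 0 T, g x ∂K.measure|
      ≤ |(∫ x in Ioc 0 T, indicator {t | s t < y t} (fun t => yn n t - s t) x ∂μn)
          - ∫ x in Ioc 0 T, g x ∂μn|
        + |(∫ x in Ioc 0 T, g x ∂μn)
          - ∑ i ∈ Finset.range m, g (t (i+1)) * (Kn n (t (i+1)) - Kn n (t i))|
        + |(∑ i ∈ Finset.range m, g (t (i+1)) * (Kn n (t (i+1)) - Kn n (t i)))
          - ∑ i ∈ Finset.range m, g (t (i+1)) * (K (t (i+1)) - K (t i))|
        + |(∑ i ∈ Finset.range m, g (t (i+1)) * (K (t (i+1)) - K (t i)))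
          - ∫ x in Ioc 0 T, g x ∂K.measure| := habs4 _ _ _ _ _
    _ < ε₁ * C + ε₁ * C + ε / 4 + ε₁ * C := by
        have hT4' : |(∑ i ∈ Finset.range m, g (t (i+1)) * (K (t (i+1)) - K (t i)))
            - ∫ x in Ioc 0 T, g x ∂K.measure| ≤ ε₁ * C := by
          rw [abs_sub_comm]; exact hT4
        exact add_lt_add_of_lt_of_le
          (add_lt_add_of_le_of_lt (add_le_add hT1 hT2) h3) hT4'
    _ = ε := by rw [hε₁C]; ring
end
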